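/- Let {(x^k, y^k)} be a sequence generated by the inexact penalty decomposition method, i.e., for every k one has ‖∇_x q_{τ_k}(x^{k+1}, y^{k+1})‖ ≤ δ_k and y^{k+1} ∈ Π_D(x^{k+1}), where {δ_k} ⊆ [0,∞) is bounded and τ_k → ∞ with τ_k > 0. Then every accumulation point (x̄, ȳ) of {(x^k, y^k)} satisfies G'(x̄)*(G(x̄) − P_C(G(x̄))) + x̄ − ȳ = 0 and 0 ∈ ȳ − x̄ + N_D^lim(ȳ); that is, (x̄, ȳ) is an M-stationary point of the feasibility problem: minimize (1/2)dist_C(G(x))² + (1/2)‖x − y‖² subject to y ∈ D. -/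

import Mathlib

open Filter Topology RealInnerProductSpace

noncomputable section

/-- The (set-valued) Euclidean projection of `x` onto `D`:
`Π_D(x) = argmin_{z ∈ D} ‖z - x‖`. -/
def projSet {E : Type*} [NormedAddCommGroup E] (D : Set E) (x : E) : Set E :=
  {z | z ∈ D ∧ ∀ w ∈ D, ‖z - x‖ ≤ ‖w - x‖}

/-- The limiting (Mordukhovich) normal cone to `D` at `x`:
`N_D^lim(x) = limsup_{v → x} cone(v - Π_D(v))`, empty outside `D`. -/
def limNormalCone {E : Type*} [NormedAddCommGroup E] [NormedSpace ℝ E]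
    (D : Set E) (x : E) : Set E :=
  {w | x ∈ D ∧ ∃ v ws : ℕ → E,
    Tendsto v atTop (𝓝 x) ∧ Tendsto ws atTop (𝓝 w) ∧
    ∀ j, ∃ t : ℝ, ∃ p, 0 ≤ t ∧ p ∈ projSet D (v j) ∧ ws j = t • (v j - p)}

/-- The normal cone (of convex analysis) to the convex set `C` at `y`, empty outside `C`. -/
def convNormalCone {E : Type*} [NormedAddCommGroup E] [InnerProductSpace ℝ E]
    (C : Set E) (y : E) : Set E :=
  {l | y ∈ C ∧ ∀ c ∈ C, ⟪l, c - y⟫ ≤ 0}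

section ProjAux

variable {F : Type*} [NormedAddCommGroup F] [InnerProductSpace ℝ F] [CompleteSpace F]

set_option linter.unusedSectionVars false

/-- Variational inequality for the projection onto a convex set. -/
lemma proj_var_ineq {C : Set F} (hC : Convex ℝ C) (PC : F → F)
    (hPC : ∀ w, PC w ∈ C ∧ ∀ c ∈ C, ‖PC w - w‖ ≤ ‖c - w‖) (w : F) :
    ∀ c ∈ C, ⟪w - PC w, c - PC w⟫ ≤ 0 := by
  intro c hc
  by_contra hcon
  push_neg at hcon
  set a := PC w with ha
  set d := c - a with hd
  have hd0 : d ≠ 0 := by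
    intro h
    rw [h, inner_zero_right] at hcon
    exact lt_irrefl 0 hcon
  have hdn : (0:ℝ) < ‖d‖ ^ 2 := by
    have : 0 < ‖d‖ := norm_pos_iff.mpr hd0
    positivity
  set t : ℝ := min 1 (⟪w - a, d⟫ / ‖d‖ ^ 2) with ht
  have ht0 : 0 < t := lt_min one_pos (div_pos hcon hdn)
  have ht1 : t ≤ 1 := min_le_left _ _
  have hmem : a + t • d ∈ C := by
    have := hC (hPC w).1 hc (by linarith : (0:ℝ) ≤ 1 - t) (le_of_lt ht0) (by ring)
    have he : (1 - t) • a + t • c = a + t • d := by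
      rw [hd]; module
    rwa [he] at this
  have hmin := (hPC w).2 _ hmem
  have hexp : ‖a + t • d - w‖ ^ 2 = ‖a - w‖ ^ 2 + 2 * (t * ⟪a - w, d⟫) + t ^ 2 * ‖d‖ ^ 2 := by
    have : a + t • d - w = (a - w) + t • d := by abel
    rw [this, norm_add_sq_real, real_inner_smul_right, norm_smul, Real.norm_eq_abs,
      mul_pow, sq_abs]
  have hsq : ‖a - w‖ ^ 2 ≤ ‖a + t • d - w‖ ^ 2 := by
    apply pow_le_pow_left₀ (norm_nonneg _) hmin
  have hiaw : ⟪a - w, d⟫ = -⟪w - a, d⟫ := by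
    rw [show a - w = -(w - a) by abel, inner_neg_left]
  have hkey : 2 * ⟪w - a, d⟫ ≤ t * ‖d‖ ^ 2 := by
    rw [hexp, hiaw] at hsq
    nlinarith
  have htle : t * ‖d‖ ^ 2 ≤ ⟪w - a, d⟫ := by
    have : t ≤ ⟪w - a, d⟫ / ‖d‖ ^ 2 := min_le_right _ _
    calc t * ‖d‖ ^ 2 ≤ (⟪w - a, d⟫ / ‖d‖ ^ 2) * ‖d‖ ^ 2 :=
          mul_le_mul_of_nonneg_right this (le_of_lt hdn)
      _ = ⟪w - a, d⟫ := by field_simp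
  linarith

/-- The projection onto a convex set is 1-Lipschitz (nonexpansive). -/
lemma proj_lipschitz {C : Set F} (hC : Convex ℝ C) (PC : F → F)
    (hPC : ∀ w, PC w ∈ C ∧ ∀ c ∈ C, ‖PC w - w‖ ≤ ‖c - w‖) (u v : F) :
    ‖PC u - PC v‖ ≤ ‖u - v‖ := by
  set a := PC u
  set b := PC v
  have h1 : ⟪u - a, b - a⟫ ≤ 0 := proj_var_ineq hC PC hPC u b (hPC v).1
  have h2 : ⟪v - b, a - b⟫ ≤ 0 := proj_var_ineq hC PC hPC v a (hPC u).1
  have hsum : ‖a - b‖ ^ 2 ≤ ⟪u - v, a - b⟫ := by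
    have hexp : ⟪u - v, a - b⟫ = ‖a - b‖ ^ 2 + (-⟪u - a, b - a⟫) + (-⟪v - b, a - b⟫) := by
      rw [← real_inner_self_eq_norm_sq]
      simp only [inner_sub_left, inner_sub_right]
      ring
    linarith [hexp]
  have hcs : ⟪u - v, a - b⟫ ≤ ‖u - v‖ * ‖a - b‖ := real_inner_le_norm _ _
  rcases eq_or_lt_of_le (norm_nonneg (a - b)) with h | h
  · rw [← h]; exact norm_nonneg _
  · have : ‖a - b‖ * ‖a - b‖ ≤ ‖u - v‖ * ‖a - b‖ := by nlinarith
    exact le_of_mul_le_mul_right this h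

/-- A function satisfying a uniform quadratic expansion bound has the given gradient. -/
lemma hasGradientAt_of_quadratic_bound (h : F → ℝ) (x v : F)
    (hb : ∀ u, |h u - h x - ⟪v, u - x⟫| ≤ ‖u - x‖ ^ 2) : HasGradientAt h v x := by
  rw [hasGradientAt_iff_hasFDerivAt]
  apply HasFDerivAtFilter.of_isLittleO
  rw [Asymptotics.isLittleO_iff]
  intro c hc
  rw [Filter.prod_pure, Filter.eventually_map, Metric.eventually_nhds_iff]
  refine ⟨c, hc, fun u hu => ?_⟩
  rw [dist_eq_norm] at hu
  have h1 := hb u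
  have : ‖h u - h x - (InnerProductSpace.toDual ℝ F v) (u - x)‖ ≤ ‖u - x‖ ^ 2 := by
    rw [InnerProductSpace.toDual_apply_apply, Real.norm_eq_abs]
    exact h1
  calc ‖h u - h x - (InnerProductSpace.toDual ℝ F v) (u - x)‖ ≤ ‖u - x‖ ^ 2 := this
    _ = ‖u - x‖ * ‖u - x‖ := by ring
    _ ≤ c * ‖u - x‖ := mul_le_mul_of_nonneg_right (le_of_lt hu) (norm_nonneg _)

/-- Gradient of the squared distance to a convex set. -/
lemma hasGradientAt_distSq {C : Set F} (hC : Convex ℝ C) (PC : F → F)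
    (hPC : ∀ w, PC w ∈ C ∧ ∀ c ∈ C, ‖PC w - w‖ ≤ ‖c - w‖) (w : F) :
    HasGradientAt (fun u => ‖u - PC u‖ ^ 2) ((2:ℝ) • (w - PC w)) w := by
  apply hasGradientAt_of_quadratic_bound
  intro u
  set p := PC w
  set q := PC u
  have hA : ‖u - q‖ ≤ ‖u - p‖ := by
    have := (hPC u).2 p (hPC w).1
    rwa [norm_sub_rev q u, norm_sub_rev p u] at this
  have hB : ‖w - p‖ ≤ ‖w - q‖ := by
    have := (hPC w).2 q (hPC u).1
    rwa [norm_sub_rev p w, norm_sub_rev q w] at this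
  have hL : ‖q - p‖ ≤ ‖u - w‖ := proj_lipschitz hC PC hPC u w
  have E1 : ‖u - p‖ ^ 2 = ‖w - p‖ ^ 2 + 2 * ⟪w - p, u - w⟫ + ‖u - w‖ ^ 2 := by
    rw [show u - p = (w - p) + (u - w) by abel, norm_add_sq_real]
  have E2 : ‖w - q‖ ^ 2 = ‖u - q‖ ^ 2 - 2 * ⟪u - q, u - w⟫ + ‖u - w‖ ^ 2 := by
    rw [show w - q = (u - q) + (w - u) by abel, norm_add_sq_real,
      show w - u = -(u - w) by abel, inner_neg_right, norm_neg]
    ring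
  have hkey : ⟪w - p, u - w⟫ ≤ ⟪u - q, u - w⟫ := by
    have hexp : ⟪u - q, u - w⟫ = ⟪w - p, u - w⟫ + ‖u - w‖ ^ 2 - ⟪q - p, u - w⟫ := by
      rw [← real_inner_self_eq_norm_sq]
      simp only [inner_sub_left, inner_sub_right]
      ring
    have hcs : ⟪q - p, u - w⟫ ≤ ‖q - p‖ * ‖u - w‖ := real_inner_le_norm _ _
    nlinarith [mul_le_mul_of_nonneg_right hL (norm_nonneg (u - w))]
  have hiv : ⟪(2:ℝ) • (w - p), u - w⟫ = 2 * ⟪w - p, u - w⟫ := real_inner_smul_left _ _ _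
  rw [abs_le]
  constructor
  · have hsq : ‖w - p‖ ^ 2 ≤ ‖w - q‖ ^ 2 := pow_le_pow_left₀ (norm_nonneg _) hB 2
    rw [E2] at hsq
    rw [hiv]
    nlinarith
  · have hsq : ‖u - q‖ ^ 2 ≤ ‖u - p‖ ^ 2 := pow_le_pow_left₀ (norm_nonneg _) hA 2
    rw [E1] at hsq
    rw [hiv]
    nlinarith

/-- Gradient of `u ↦ ‖u - y‖²`. -/
lemma hasGradientAt_sqdist_pt (x y : F) :
    HasGradientAt (fun u => ‖u - y‖ ^ 2) ((2:ℝ) • (x - y)) x := by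
  apply hasGradientAt_of_quadratic_bound
  intro u
  have E1 : ‖u - y‖ ^ 2 = ‖x - y‖ ^ 2 + 2 * ⟪x - y, u - x⟫ + ‖u - x‖ ^ 2 := by
    rw [show u - y = (x - y) + (u - x) by abel, norm_add_sq_real]
  have hiv : ⟪(2:ℝ) • (x - y), u - x⟫ = 2 * ⟪x - y, u - x⟫ := real_inner_smul_left _ _ _
  rw [hiv, E1, show ‖x - y‖ ^ 2 + 2 * ⟪x - y, u - x⟫ + ‖u - x‖ ^ 2 - ‖x - y‖ ^ 2
      - 2 * ⟪x - y, u - x⟫ = ‖u - x‖ ^ 2 by ring, abs_of_nonneg (sq_nonneg _)]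

end ProjAux

variable {X Y : Type*} [NormedAddCommGroup X] [InnerProductSpace ℝ X] [FiniteDimensional ℝ X]
  [NormedAddCommGroup Y] [InnerProductSpace ℝ Y] [FiniteDimensional ℝ Y]

/-- The partial penalty function
`q_τ(x,y) = f(x) + (τ/2) (‖x-y‖² + dist_C(G(x))²)`, where `dist_C(w) = ‖w - P_C(w)‖`
and `PC` denotes the Euclidean projection onto `C`. -/
def qpen (f : X → ℝ) (G : X → Y) (PC : Y → Y) (τ : ℝ) (x y : X) : ℝ :=
  f x + τ / 2 * (‖x - y‖ ^ 2 + ‖G x - PC (G x)‖ ^ 2)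

/-- The gradient `∇_x q_τ(x, y)` of the penalty function w.r.t. the first block. -/
def gradqx (f : X → ℝ) (G : X → Y) (PC : Y → Y) (τ : ℝ) (x y : X) : X :=
  gradient (fun u => qpen f G PC τ u y) x

lemma gradqx_eq (f : X → ℝ) (G : X → Y) {C : Set Y} (hCconv : Convex ℝ C)
    (hf : ContDiff ℝ 1 f) (hG : ContDiff ℝ 1 G)
    (PC : Y → Y) (hPC : ∀ w, PC w ∈ C ∧ ∀ c ∈ C, ‖PC w - w‖ ≤ ‖c - w‖)
    (τ : ℝ) (x y : X) :
    gradqx f G PC τ x y = gradient f x + τ • ((x - y) +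
      (ContinuousLinearMap.adjoint (fderiv ℝ G x)) (G x - PC (G x))) := by
  have hf' : HasFDerivAt f (fderiv ℝ f x) x :=
    (hf.differentiable one_ne_zero).differentiableAt.hasFDerivAt
  have hG' : HasFDerivAt G (fderiv ℝ G x) x :=
    (hG.differentiable one_ne_zero).differentiableAt.hasFDerivAt
  have h1 : HasFDerivAt (fun u : X => ‖u - y‖ ^ 2)
      (InnerProductSpace.toDual ℝ X ((2:ℝ) • (x - y))) x :=
    (hasGradientAt_sqdist_pt x y).hasFDerivAt
  have h2 : HasFDerivAt (fun u : X => ‖G u - PC (G u)‖ ^ 2)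
      ((InnerProductSpace.toDual ℝ Y ((2:ℝ) • (G x - PC (G x)))).comp (fderiv ℝ G x)) x :=
    (hasGradientAt_distSq hCconv PC hPC (G x)).hasFDerivAt.comp x hG'
  have hq : HasFDerivAt (fun u => qpen f G PC τ u y)
      (fderiv ℝ f x + (τ / 2) • ((InnerProductSpace.toDual ℝ X ((2:ℝ) • (x - y))) +
        (InnerProductSpace.toDual ℝ Y ((2:ℝ) • (G x - PC (G x)))).comp (fderiv ℝ G x))) x :=
    hf'.add ((h1.add h2).const_mul (τ / 2))
  show gradient (fun u => qpen f G PC τ u y) x = _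
  rw [hq.hasGradientAt.gradient]
  apply (InnerProductSpace.toDual ℝ X).injective
  rw [LinearIsometryEquiv.apply_symm_apply]
  ext d
  simp only [ContinuousLinearMap.add_apply, ContinuousLinearMap.coe_smul',
    Pi.smul_apply, ContinuousLinearMap.comp_apply, InnerProductSpace.toDual_apply_apply,
    inner_add_left, real_inner_smul_left, ContinuousLinearMap.adjoint_inner_left,
    smul_eq_mul, gradient, InnerProductSpace.toDual_symm_apply]
  ring

/-- accumulation points of the inexact penalty decomposition method are
M-stationary points of the feasibility problem
`min (1/2) dist_C(G(x))² + (1/2)‖x - y‖²  s.t. y ∈ D`. -/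
theorem pd_accumulation_point_feasibility_stationarity
    (f : X → ℝ) (G : X → Y) (C : Set Y) (D : Set X)
    (hf : ContDiff ℝ 1 f) (hG : ContDiff ℝ 1 G)
    (hCne : C.Nonempty) (hCcl : IsClosed C) (hCconv : Convex ℝ C)
    (hDne : D.Nonempty) (hDcl : IsClosed D)
    (PC : Y → Y) (hPC : ∀ w, PC w ∈ C ∧ ∀ c ∈ C, ‖PC w - w‖ ≤ ‖c - w‖)
    (δ τs : ℕ → ℝ) (hδnn : ∀ k, 0 ≤ δ k) (hδbd : ∃ Mb : ℝ, ∀ k, δ k ≤ Mb)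
    (hτpos : ∀ k, 0 < τs k) (hτ : Tendsto τs atTop atTop)
    (x y : ℕ → X)
    (halg : ∀ k, ‖gradqx f G PC (τs k) (x (k + 1)) (y (k + 1))‖ ≤ δ k ∧
      y (k + 1) ∈ projSet D (x (k + 1)))
    (xb yb : X) (φ : ℕ → ℕ) (hφ : StrictMono φ)
    (hxb : Tendsto (fun j => x (φ j)) atTop (𝓝 xb))
    (hyb : Tendsto (fun j => y (φ j)) atTop (𝓝 yb)) :
    ContinuousLinearMap.adjoint (fderiv ℝ G xb) (G xb - PC (G xb)) + xb - yb = 0 ∧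
      ∃ w ∈ limNormalCone D yb, yb - xb + w = 0 := by
  obtain ⟨Mb, hMb⟩ := hδbd
  set A : X → X := fun u =>
    (ContinuousLinearMap.adjoint (fderiv ℝ G u)) (G u - PC (G u)) with hA
  set ψ : ℕ → ℕ := fun j => φ (j + 1) - 1 with hψdef
  have hψ1 : ∀ j, φ (j + 1) = ψ j + 1 := by
    intro j
    have := hφ.le_apply (x := j + 1)
    simp only [hψdef]
    omega
  have hψge : ∀ j, j ≤ ψ j := by
    intro j
    have := hφ.le_apply (x := j + 1)
    simp only [hψdef]
    omega
  have hxb' : Tendsto (fun j => x (φ (j + 1))) atTop (𝓝 xb) :=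
    hxb.comp (tendsto_add_atTop_nat 1)
  have hyb' : Tendsto (fun j => y (φ (j + 1))) atTop (𝓝 yb) :=
    hyb.comp (tendsto_add_atTop_nat 1)
  -- continuity facts
  have hPCc : Continuous PC := by
    have : LipschitzWith 1 PC := LipschitzWith.of_dist_le_mul (fun u v => by
      rw [dist_eq_norm, dist_eq_norm]
      simpa using proj_lipschitz hCconv PC hPC u v)
    exact this.continuous
  have hAc : Continuous A := by
    have h1 : Continuous fun u => ContinuousLinearMap.adjoint (fderiv ℝ G u) :=
      (ContinuousLinearMap.adjoint (𝕜 := ℝ) (E := X) (F := Y)).continuous.comp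
        (hG.continuous_fderiv one_ne_zero)
    exact h1.clm_apply (hG.continuous.sub (hPCc.comp hG.continuous))
  have hgradc : Continuous (gradient f) := by
    show Continuous fun u => (InnerProductSpace.toDual ℝ X).symm (fderiv ℝ f u)
    exact (InnerProductSpace.toDual ℝ X).symm.continuous.comp (hf.continuous_fderiv one_ne_zero)
  -- the residual sequence
  set s : ℕ → X := fun j => A (x (φ (j + 1))) + x (φ (j + 1)) - y (φ (j + 1)) with hs
  have hs1 : Tendsto s atTop (𝓝 (A xb + xb - yb)) :=
    (((hAc.tendsto xb).comp hxb').add hxb').sub hyb'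
  have hbound : ∀ j, ‖s j‖ ≤ δ (ψ j) / τs (ψ j) +
      ‖gradient f (x (φ (j + 1)))‖ / τs (ψ j) := by
    intro j
    have halg1 := (halg (ψ j)).1
    rw [← hψ1 j] at halg1
    have hgeq := gradqx_eq f G hCconv hf hG PC hPC (τs (ψ j)) (x (φ (j + 1))) (y (φ (j + 1)))
    have hsj : τs (ψ j) • s j =
        gradqx f G PC (τs (ψ j)) (x (φ (j + 1))) (y (φ (j + 1)))
          - gradient f (x (φ (j + 1))) := by
      rw [hgeq, hs]
      simp only [smul_add, smul_sub]
      abel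
    have hτj := hτpos (ψ j)
    have h1 : τs (ψ j) * ‖s j‖ ≤ δ (ψ j) + ‖gradient f (x (φ (j + 1)))‖ := by
      have e1 : τs (ψ j) * ‖s j‖ = ‖τs (ψ j) • s j‖ := by
        rw [norm_smul, Real.norm_eq_abs, abs_of_pos hτj]
      rw [e1, hsj]
      calc ‖_ - _‖ ≤ ‖gradqx f G PC (τs (ψ j)) (x (φ (j + 1))) (y (φ (j + 1)))‖ +
            ‖gradient f (x (φ (j + 1)))‖ := norm_sub_le _ _
        _ ≤ _ := by linarith [halg1]
    rw [← add_div, le_div_iff₀ hτj, mul_comm]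
    exact h1
  have hψat : Tendsto ψ atTop atTop :=
    tendsto_atTop_mono hψge tendsto_id
  have hτψ : Tendsto (fun j => τs (ψ j)) atTop atTop := hτ.comp hψat
  have hb1 : Tendsto (fun j => δ (ψ j) / τs (ψ j)) atTop (𝓝 0) := by
    apply squeeze_zero (fun j => div_nonneg (hδnn _) (hτpos _).le)
      (fun j => div_le_div_of_nonneg_right (hMb (ψ j)) (hτpos (ψ j)).le)
    exact tendsto_const_nhds.div_atTop hτψ
  have hb2 : Tendsto (fun j => ‖gradient f (x (φ (j + 1)))‖ / τs (ψ j)) atTop (𝓝 0) :=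
    Tendsto.div_atTop ((hgradc.norm.tendsto xb).comp hxb') hτψ
  have hs0 : Tendsto s atTop (𝓝 0) := by
    apply squeeze_zero_norm hbound
    simpa using hb1.add hb2
  have part1 : A xb + xb - yb = 0 := tendsto_nhds_unique hs1 hs0
  refine ⟨part1, ?_⟩
  -- second part
  have hybD : yb ∈ D := by
    apply hDcl.mem_of_tendsto hyb'
    filter_upwards with j
    have := (halg (ψ j)).2
    rw [← hψ1 j] at this
    exact this.1
  have hproj : yb ∈ projSet D xb := by
    refine ⟨hybD, fun w hw => ?_⟩
    have hptw : ∀ j, ‖y (φ (j + 1)) - x (φ (j + 1))‖ ≤ ‖w - x (φ (j + 1))‖ := by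
      intro j
      have := (halg (ψ j)).2
      rw [← hψ1 j] at this
      exact this.2 w hw
    exact le_of_tendsto_of_tendsto' ((hyb'.sub hxb').norm)
      ((tendsto_const_nhds.sub hxb').norm) hptw
  refine ⟨xb - yb, ⟨hybD, fun j => yb + ((1:ℝ)/(j+1)) • (xb - yb), fun _ => xb - yb,
    ?_, tendsto_const_nhds, ?_⟩, by abel⟩
  · have h0 : Tendsto (fun j : ℕ => ((1:ℝ)/(j+1)) • (xb - yb)) atTop (𝓝 0) := by
      have := (tendsto_one_div_add_atTop_nhds_zero_nat (𝕜 := ℝ)).smul_const (xb - yb)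
      simpa using this
    have := tendsto_const_nhds.add h0 (f := fun j : ℕ => yb)
    simpa using this
  · intro j
    refine ⟨(j+1 : ℝ), yb, by positivity, ⟨hybD, fun z hz => ?_⟩, ?_⟩
    · -- ‖yb - v j‖ ≤ ‖z - v j‖
      set sj : ℝ := (1:ℝ)/(j+1) with hsj
      have hsj0 : 0 < sj := by positivity
      have hsj1 : sj ≤ 1 := by
        rw [hsj, div_le_one (by positivity)]
        linarith [Nat.cast_nonneg (α := ℝ) j]
      have e1 : yb - (yb + sj • (xb - yb)) = -(sj • (xb - yb)) := by abel
      have e2 : xb - (yb + sj • (xb - yb)) = (1 - sj) • (xb - yb) := by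
        rw [sub_smul, one_smul]; abel
      have n1 : ‖yb - (yb + sj • (xb - yb))‖ = sj * ‖xb - yb‖ := by
        rw [e1, norm_neg, norm_smul, Real.norm_eq_abs, abs_of_pos hsj0]
      have n2 : ‖xb - (yb + sj • (xb - yb))‖ = (1 - sj) * ‖xb - yb‖ := by
        rw [e2, norm_smul, Real.norm_eq_abs, abs_of_nonneg (by linarith)]
      have hzxb : ‖xb - yb‖ ≤ ‖z - xb‖ := by
        have := hproj.2 z hz
        rwa [norm_sub_rev yb xb] at this
      have htri : ‖z - xb‖ ≤ ‖z - (yb + sj • (xb - yb))‖ + ‖xb - (yb + sj • (xb - yb))‖ := by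
        have : z - xb = (z - (yb + sj • (xb - yb))) - (xb - (yb + sj • (xb - yb))) := by abel
        rw [this]
        exact norm_sub_le _ _
      rw [n1]
      rw [n2] at htri
      nlinarith [norm_nonneg (xb - yb)]
    · rw [add_sub_cancel_left, smul_smul]
      rw [show ((j:ℝ)+1) * ((1:ℝ)/(j+1)) = 1 by field_simp, one_smul]
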